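/- (Repair of a sub-reverse fan, Section 4.) Let φ be a proper partial edge coloring of a finite simple graph G with color set C. Let w be a vertex and let x, y be two distinct neighbors of w such that the edges wx and wy are both uncolored. Let α, β ∈ C be distinct colors with α ∈ M(x) ∩ M(y), α ∉ M(w), and β ∈ M(w). Let P_w be the αβ-alternating path starting at w (it exists and has w as an endpoint since w is incident to an α-colored edge but to no β-colored edge). Let φ' be obtained from φ by augmenting P_w and then coloring wx with α if P_w does not end at x, and coloring wy with α otherwise. Then φ' is a proper partial edge coloring whose set of colored edges is the set of colored edges of φ together with exactly one of wx, wy; in particular, in φ' the color α is not missing at w (so any other uncolored edges at w whose repair requires α ∉ M(w) are not destroyed). -/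

import Mathlib

/-- A proper partial edge coloring of `G` with color set `C`. -/
def IsProperPartialEC {V : Type*} (G : SimpleGraph V) (C : Set ℕ)
    (φ : Sym2 V → Option ℕ) : Prop :=
  (∀ e : Sym2 V, φ e ≠ none → e ∈ G.edgeSet) ∧
  (∀ (e : Sym2 V) (c : ℕ), φ e = some c → c ∈ C) ∧
  (∀ e₁ e₂ : Sym2 V, e₁ ≠ e₂ → (∃ x : V, x ∈ e₁ ∧ x ∈ e₂) →
    ∀ c : ℕ, φ e₁ = some c → φ e₂ ≠ some c)

/-- `missingColors G C φ x` is the set `M(x)` of colors of `C` not assigned by `φ`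
to any edge of `G` incident to `x`. -/
def missingColors {V : Type*} (G : SimpleGraph V) (C : Set ℕ)
    (φ : Sym2 V → Option ℕ) (x : V) : Set ℕ :=
  {c | c ∈ C ∧ ∀ e ∈ G.edgeSet, x ∈ e → φ e ≠ some c}

/-- A maximal `αβ`-alternating path. -/
def IsMaxAltPath {V : Type*} (G : SimpleGraph V) (φ : Sym2 V → Option ℕ)
    (α β : ℕ) {u v : V} (p : G.Walk u v) : Prop :=
  p.IsPath ∧
  (∀ e ∈ p.edges, φ e = some α ∨ φ e = some β) ∧
  List.Chain' (fun e₁ e₂ => φ e₁ ≠ φ e₂) p.edges ∧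
  (∀ e ∈ G.edgeSet, u ∈ e → (φ e = some α ∨ φ e = some β) → e ∈ p.edges) ∧
  (∀ e ∈ G.edgeSet, v ∈ e → (φ e = some α ∨ φ e = some β) → e ∈ p.edges)

/-- Augmenting along the list of edges `es`: swap the colors `α` and `β` on `es`. -/
def augmentColoring {V : Type*} [DecidableEq V] (φ : Sym2 V → Option ℕ)
    (α β : ℕ) (es : List (Sym2 V)) : Sym2 V → Option ℕ :=
  fun e => if e ∈ es then
    (if φ e = some α then some β else if φ e = some β then some α else φ e)
  else φ e

/-- At an interior vertex `v` of a walk `p`, there are two edges of `p` containing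
`v` that are consecutive in `p.edges` (so any `Chain'` relation on the edges
relates them). -/
lemma exists_two_edges_at {V : Type*} [DecidableEq V] {G : SimpleGraph V} {w z v : V}
    (p : G.Walk w z) (R : Sym2 V → Sym2 V → Prop)
    (hchain : List.Chain' R p.edges)
    (hv : v ∈ p.support) (hvw : v ≠ w) (hvz : v ≠ z) :
    ∃ e₁ e₂, e₁ ∈ p.edges ∧ e₂ ∈ p.edges ∧ v ∈ e₁ ∧ v ∈ e₂ ∧ R e₁ e₂ := by
  classical
  have hspec := p.take_spec hv
  set q := p.takeUntil v hv with hq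
  set r := p.dropUntil v hv with hr
  have hq_nnil : ¬ q.Nil := SimpleGraph.Walk.not_nil_of_ne hvw.symm
  have hr_nnil : ¬ r.Nil := SimpleGraph.Walk.not_nil_of_ne hvz
  obtain ⟨u₂, hadj₂, r', hr'⟩ := SimpleGraph.Walk.not_nil_iff.mp hr_nnil
  have hqrev : ¬ q.reverse.Nil := by
    rw [SimpleGraph.Walk.nil_iff_length_eq, SimpleGraph.Walk.length_reverse,
      ← SimpleGraph.Walk.nil_iff_length_eq]
    exact hq_nnil
  obtain ⟨u₁, hadj₁, q', hq'⟩ := SimpleGraph.Walk.not_nil_iff.mp hqrev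
  have hqe : q.edges.reverse = s(v, u₁) :: q'.edges := by
    rw [← SimpleGraph.Walk.edges_reverse, hq', SimpleGraph.Walk.edges_cons]
  have hpe : p.edges = q.edges ++ r.edges := by
    rw [← hspec, SimpleGraph.Walk.edges_append]
  have hre : r.edges = s(v, u₂) :: r'.edges := by
    rw [hr', SimpleGraph.Walk.edges_cons]
  rw [hpe] at hchain
  have hR := (List.isChain_append.mp hchain).2.2
  have hlast : q.edges.getLast? = some s(v, u₁) := by
    rw [← List.head?_reverse, hqe]; rfl
  have hhead : r.edges.head? = some s(v, u₂) := by rw [hre]; rfl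
  have hmem1 : s(v, u₁) ∈ q.edges :=
    List.mem_reverse.mp (by rw [hqe]; exact List.mem_cons_self)
  refine ⟨s(v, u₁), s(v, u₂), ?_, ?_, Sym2.mem_mk_left _ _, Sym2.mem_mk_left _ _, ?_⟩
  · rw [hpe]; exact List.mem_append_left _ hmem1
  · rw [hpe, hre]; exact List.mem_append_right _ (List.mem_cons_self)
  · exact hR _ (Option.mem_def.mpr hlast) _ (Option.mem_def.mpr hhead)

/-- Every `αβ`-colored edge incident to a vertex of a maximal `αβ`-alternating
path belongs to the path. -/
lemma altpath_absorbs {V : Type*} [DecidableEq V] {G : SimpleGraph V} {C : Set ℕ}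
    {φ : Sym2 V → Option ℕ} (hφ : IsProperPartialEC G C φ)
    {α β : ℕ} {w z : V} {p : G.Walk w z} (hp : IsMaxAltPath G φ α β p)
    {v : V} (hv : v ∈ p.support) {e : Sym2 V} (he : e ∈ G.edgeSet) (hve : v ∈ e)
    (hc : φ e = some α ∨ φ e = some β) : e ∈ p.edges := by
  by_cases hvw : v = w
  · exact hp.2.2.2.1 e he (hvw ▸ hve) hc
  by_cases hvz : v = z
  · exact hp.2.2.2.2 e he (hvz ▸ hve) hc
  obtain ⟨e₁, e₂, he₁, he₂, hv1, hv2, hR⟩ :=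
    exists_two_edges_at p _ hp.2.2.1 hv hvw hvz
  have hc₁ := hp.2.1 e₁ he₁
  have hc₂ := hp.2.1 e₂ he₂
  obtain ⟨c, hec⟩ : ∃ c, φ e = some c := hc.elim (⟨α, ·⟩) (⟨β, ·⟩)
  have key : φ e = φ e₁ ∨ φ e = φ e₂ := by
    rcases hc₁ with h1 | h1 <;> rcases hc₂ with h2 | h2 <;> rcases hc with h | h <;>
      simp_all
  rcases key with h | h
  · rcases Classical.em (e = e₁) with rfl | hne
    · exact he₁
    · exact absurd (h.symm.trans hec) (hφ.2.2 e e₁ hne ⟨v, hve, hv1⟩ c hec)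
  · rcases Classical.em (e = e₂) with rfl | hne
    · exact he₂
    · exact absurd (h.symm.trans hec) (hφ.2.2 e e₂ hne ⟨v, hve, hv2⟩ c hec)

/-- A vertex of a maximal `αβ`-alternating path, other than the start, at which
`α` is missing must be the end of the path. -/
lemma altpath_end_of_missing {V : Type*} [DecidableEq V] {G : SimpleGraph V}
    {φ : Sym2 V → Option ℕ}
    {α β : ℕ} {w z : V} {p : G.Walk w z} (hp : IsMaxAltPath G φ α β p)
    {v : V} (hv : v ∈ p.support) (hvw : v ≠ w)
    (hmiss : ∀ e ∈ G.edgeSet, v ∈ e → φ e ≠ some α) : v = z := by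
  by_contra hvz
  obtain ⟨e₁, e₂, he₁, he₂, hv1, hv2, hR⟩ :=
    exists_two_edges_at p _ hp.2.2.1 hv hvw hvz
  have h1 : φ e₁ = some β :=
    (hp.2.1 e₁ he₁).resolve_left (hmiss e₁ (p.edges_subset_edgeSet he₁) hv1)
  have h2 : φ e₂ = some β :=
    (hp.2.1 e₂ he₂).resolve_left (hmiss e₂ (p.edges_subset_edgeSet he₂) hv2)
  exact hR (h1.trans h2.symm)

/-- **Repair of a sub-reverse fan.** With `w x`, `w y` uncolored,
`α ∈ M(x) ∩ M(y)`, `α ∉ M(w)`, `β ∈ M(w)`, augment the maximal `αβ`-alternating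
path `p` starting at `w` and then color `w x` with `α` if `p` does not end at `x`,
and `w y` with `α` otherwise.  The result is a proper partial coloring whose
colored edges are those of `φ` together with exactly one of `w x`, `w y`, and in
which `α` is not missing at `w`. -/
theorem subreverse_fan_repair {V : Type*} [Fintype V] [DecidableEq V]
    (G : SimpleGraph V) (C : Set ℕ) (φ : Sym2 V → Option ℕ)
    (hφ : IsProperPartialEC G C φ)
    (α β : ℕ) (hαβ : α ≠ β) (hαC : α ∈ C) (hβC : β ∈ C)
    (w x y : V) (hxy : x ≠ y) (hwx : G.Adj w x) (hwy : G.Adj w y)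
    (huwx : φ s(w, x) = none) (huwy : φ s(w, y) = none)
    (hαx : α ∈ missingColors G C φ x) (hαy : α ∈ missingColors G C φ y)
    (hαw : α ∉ missingColors G C φ w) (hβw : β ∈ missingColors G C φ w)
    (z : V) (p : G.Walk w z) (hp : IsMaxAltPath G φ α β p)
    (φ' : Sym2 V → Option ℕ)
    (hφ' : φ' = Function.update (augmentColoring φ α β p.edges)
      (if z = x then s(w, y) else s(w, x)) (some α)) :
    IsProperPartialEC G C φ' ∧
    {e : Sym2 V | φ' e ≠ none} =
      insert (if z = x then s(w, y) else s(w, x)) {e : Sym2 V | φ e ≠ none} ∧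
    α ∉ missingColors G C φ' w := by
  classical
  set t : V := if z = x then y else x with ht
  have he0 : (if z = x then s(w, y) else s(w, x)) = s(w, t) := by
    rw [ht]; split <;> rfl
  rw [he0] at hφ'
  set aug := augmentColoring φ α β p.edges with haugdef
  -- basic facts about t
  have hwt : G.Adj w t := by rw [ht]; split <;> assumption
  have hwtne : w ≠ t := hwt.ne
  have hαt : α ∈ missingColors G C φ t := by rw [ht]; split <;> assumption
  have htz : t ≠ z := by
    rw [ht]; split
    · rename_i h; rw [h]; exact fun hc => hxy hc.symm
    · rename_i h; exact fun hc => h hc.symm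
  have he0set : s(w, t) ∈ G.edgeSet := G.mem_edgeSet.mpr hwt
  -- aug preserves uncoloredness
  have haug_none : ∀ e, aug e = none ↔ φ e = none := by
    intro e
    simp only [haugdef, augmentColoring]
    split_ifs with h h1 h2 <;> simp_all
  -- membership in edges gives support membership
  have hsupp : ∀ e ∈ p.edges, ∀ v ∈ e, v ∈ p.support := by
    intro e he v hv
    induction e using Sym2.ind with
    | _ a b =>
      rcases Sym2.mem_iff.mp hv with rfl | rfl
      · exact p.fst_mem_support_of_mem_edges he
      · exact p.snd_mem_support_of_mem_edges he
  -- after augmenting, α is missing at w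
  have hBw : ∀ e ∈ G.edgeSet, w ∈ e → aug e ≠ some α := by
    intro e he hwe hcon
    by_cases hmem : e ∈ p.edges
    · rcases hp.2.1 e hmem with h | h
      · simp only [haugdef, augmentColoring, if_pos hmem, if_pos h] at hcon
        exact hαβ (Option.some.inj hcon).symm
      · exact hβw.2 e he hwe h
    · simp only [haugdef, augmentColoring, if_neg hmem] at hcon
      exact hmem (hp.2.2.2.1 e he hwe (Or.inl hcon))
  -- after augmenting, α is missing at t
  have hBt : ∀ e ∈ G.edgeSet, t ∈ e → aug e ≠ some α := by
    intro e he hte hcon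
    by_cases hmem : e ∈ p.edges
    · exact htz (altpath_end_of_missing hp (hsupp e hmem t hte)
        (fun h => hwtne h.symm) hαt.2)
    · simp only [haugdef, augmentColoring, if_neg hmem] at hcon
      exact hαt.2 e he hte hcon
  -- properness of aug
  have haug_proper : ∀ e₁ e₂ : Sym2 V, e₁ ≠ e₂ → (∃ v : V, v ∈ e₁ ∧ v ∈ e₂) →
      ∀ c : ℕ, aug e₁ = some c → aug e₂ ≠ some c := by
    have mixed : ∀ e₁ e₂ : Sym2 V, e₁ ∈ p.edges → e₂ ∉ p.edges →
        (∃ v : V, v ∈ e₁ ∧ v ∈ e₂) →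
        ∀ c : ℕ, aug e₁ = some c → aug e₂ ≠ some c := by
      intro e₁ e₂ h1 h2 ⟨v, hv1, hv2⟩ c hc1 hc2
      simp only [haugdef, augmentColoring, if_neg h2] at hc2
      have hc : φ e₂ = some α ∨ φ e₂ = some β := by
        rcases hp.2.1 e₁ h1 with h | h
        · have hb : aug e₁ = some β := by
            simp [haugdef, augmentColoring, h1, h]
          rw [hb] at hc1
          rw [← Option.some.inj hc1] at hc2
          exact Or.inr hc2
        · have hb : aug e₁ = some α := by
            simp [haugdef, augmentColoring, h1, h, Ne.symm hαβ]
          rw [hb] at hc1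
          rw [← Option.some.inj hc1] at hc2
          exact Or.inl hc2
      have he2set : e₂ ∈ G.edgeSet := hφ.1 e₂ (by rw [hc2]; exact Option.some_ne_none c)
      exact h2 (altpath_absorbs hφ hp (hsupp e₁ h1 v hv1) he2set hv2 hc)
    intro e₁ e₂ hne hsh c hc1 hc2
    by_cases h1 : e₁ ∈ p.edges <;> by_cases h2 : e₂ ∈ p.edges
    · -- both on the path: φ e₁ = φ e₂, contradicting properness of φ
      have heq : φ e₁ = φ e₂ := by
        rcases hp.2.1 e₁ h1 with ha | ha <;> rcases hp.2.1 e₂ h2 with hb | hb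
        · rw [ha, hb]
        · exfalso
          have h1' : aug e₁ = some β := by simp [haugdef, augmentColoring, h1, ha]
          have h2' : aug e₂ = some α := by
            simp [haugdef, augmentColoring, h2, hb, Ne.symm hαβ]
          rw [h1'] at hc1; rw [h2'] at hc2
          exact hαβ ((Option.some.inj hc2).trans (Option.some.inj hc1).symm)
        · exfalso
          have h1' : aug e₁ = some α := by
            simp [haugdef, augmentColoring, h1, ha, Ne.symm hαβ]
          have h2' : aug e₂ = some β := by simp [haugdef, augmentColoring, h2, hb]
          rw [h1'] at hc1; rw [h2'] at hc2
          exact hαβ ((Option.some.inj hc1).trans (Option.some.inj hc2).symm)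
        · rw [ha, hb]
      rcases hp.2.1 e₁ h1 with ha | ha
      · exact hφ.2.2 e₁ e₂ hne hsh α ha (heq ▸ ha)
      · exact hφ.2.2 e₁ e₂ hne hsh β ha (heq ▸ ha)
    · exact mixed e₁ e₂ h1 h2 hsh c hc1 hc2
    · obtain ⟨v, hv1, hv2⟩ := hsh
      exact mixed e₂ e₁ h2 h1 ⟨v, hv2, hv1⟩ c hc2 hc1
    · simp only [haugdef, augmentColoring, if_neg h1, if_neg h2] at hc1 hc2
      exact hφ.2.2 e₁ e₂ hne hsh c hc1 hc2
  -- value of φ' at s(w,t) and elsewhere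
  have hφ'e0 : φ' s(w, t) = some α := by rw [hφ']; exact Function.update_self _ _ _
  have hφ'ne : ∀ e, e ≠ s(w, t) → φ' e = aug e := by
    intro e hne; rw [hφ']; exact Function.update_of_ne hne _ _
  refine ⟨⟨?_, ?_, ?_⟩, ?_, ?_⟩
  · -- colored edges are edges of G
    intro e he
    by_cases h : e = s(w, t)
    · exact h ▸ he0set
    · rw [hφ'ne e h] at he
      exact hφ.1 e (fun hn => he ((haug_none e).mpr hn))
  · -- colors in C
    intro e c hc
    by_cases h : e = s(w, t)
    · rw [h, hφ'e0] at hc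
      exact (Option.some.inj hc) ▸ hαC
    · rw [hφ'ne e h] at hc
      simp only [haugdef, augmentColoring] at hc
      split_ifs at hc with h1 h2 h3
      · exact (Option.some.inj hc) ▸ hβC
      · exact (Option.some.inj hc) ▸ hαC
      · exact hφ.2.1 e c hc
      · exact hφ.2.1 e c hc
  · -- properness
    intro e₁ e₂ hne hsh c hc1 hc2
    by_cases h1 : e₁ = s(w, t) <;> by_cases h2 : e₂ = s(w, t)
    · exact hne (h1.trans h2.symm)
    · -- e₁ = s(w,t): c = α and aug e₂ = some α at w or t
      subst h1
      have hcα : c = α := by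
        rw [hφ'e0] at hc1; exact (Option.some.inj hc1).symm
      subst hcα
      rw [hφ'ne e₂ h2] at hc2
      obtain ⟨v, hv1, hv2⟩ := hsh
      have he2set : e₂ ∈ G.edgeSet :=
        hφ.1 e₂ (fun hn => (by rw [(haug_none e₂).mpr hn] at hc2; exact Option.some_ne_none c hc2.symm))
      rcases Sym2.mem_iff.mp hv1 with rfl | rfl
      · exact hBw e₂ he2set hv2 hc2
      · exact hBt e₂ he2set hv2 hc2
    · subst h2
      have hcα : c = α := by
        rw [hφ'e0] at hc2; exact (Option.some.inj hc2).symm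
      subst hcα
      rw [hφ'ne e₁ h1] at hc1
      obtain ⟨v, hv1, hv2⟩ := hsh
      have he1set : e₁ ∈ G.edgeSet :=
        hφ.1 e₁ (fun hn => (by rw [(haug_none e₁).mpr hn] at hc1; exact Option.some_ne_none c hc1.symm))
      rcases Sym2.mem_iff.mp hv2 with rfl | rfl
      · exact hBw e₁ he1set hv1 hc1
      · exact hBt e₁ he1set hv1 hc1
    · rw [hφ'ne e₁ h1] at hc1
      rw [hφ'ne e₂ h2] at hc2
      exact haug_proper e₁ e₂ hne hsh c hc1 hc2
  · -- the set of colored edges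
    rw [he0]
    ext e
    simp only [Set.mem_setOf_eq, Set.mem_insert_iff]
    by_cases h : e = s(w, t)
    · subst h
      simp [hφ'e0]
    · rw [hφ'ne e h]
      constructor
      · intro hn; exact Or.inr (fun hc => hn ((haug_none e).mpr hc))
      · rintro (rfl | hn)
        · exact absurd rfl h
        · exact fun hc => hn ((haug_none e).mp hc)
  · -- α is not missing at w
    intro hmiss
    exact hmiss.2 s(w, t) he0set (Sym2.mem_mk_left _ _) hφ'e0
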